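/- Let ρ and σ be positive semi-definite operators on a finite-dimensional Hilbert space with spectral decompositions ρ = Σ_k q_k |φ_k⟩⟨φ_k| and σ = Σ_j p_j |ψ_j⟩⟨ψ_j|. For every t ∈ (0,1], Σ_{j,k} (q_k · p_j)/(q_k + p_j·t) · |⟨ψ_j|φ_k⟩|² = (1/t) · inf_Z ( Tr[ρ Z†Z] + t · Tr[σ (𝟙+Z)(𝟙+Z†)] ), where the infimum is over all linear operators Z on the Hilbert space. -/

import Mathlib

open Matrix

lemma pw_le (q p t : ℝ) (hq : 0 ≤ q) (hp : 0 ≤ p) (ht : 0 < t) (c z : ℂ) :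
    t * ((q * p) / (q + p * t)) * Complex.normSq c ≤
      q * Complex.normSq z + t * p * Complex.normSq (c + z) := by
  rcases eq_or_lt_of_le (by positivity : (0:ℝ) ≤ q + p * t) with hs | hs
  · have hq0 : q = 0 := by nlinarith
    have hp0 : p = 0 := by nlinarith
    simp [hq0, hp0]
  · rw [show t * ((q * p) / (q + p * t)) * Complex.normSq c
        = t * q * p * Complex.normSq c / (q + p * t) by ring, div_le_iff₀ hs]
    simp only [Complex.normSq_apply, Complex.add_re, Complex.add_im]
    nlinarith [sq_nonneg (q * z.re + t * p * (c.re + z.re)),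
      sq_nonneg (q * z.im + t * p * (c.im + z.im))]

lemma pw_eq (q p t : ℝ) (hq : 0 ≤ q) (hp : 0 ≤ p) (ht : 0 < t) (c : ℂ) :
    q * Complex.normSq (((-(t * p) / (q + p * t) : ℝ) : ℂ) * c) +
      t * p * Complex.normSq (c + ((-(t * p) / (q + p * t) : ℝ) : ℂ) * c) =
      t * ((q * p) / (q + p * t)) * Complex.normSq c := by
  rcases eq_or_lt_of_le (by positivity : (0:ℝ) ≤ q + p * t) with hs | hs
  · have hq0 : q = 0 := by nlinarith
    have hp0 : p = 0 := by nlinarith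
    simp [hq0, hp0]
  · have h1 : c + ((-(t * p) / (q + p * t) : ℝ) : ℂ) * c
        = ((q / (q + p * t) : ℝ) : ℂ) * c := by
      push_cast
      have : ((q:ℂ) + p * t) ≠ 0 := by
        simp only [← Complex.ofReal_mul, ← Complex.ofReal_add]
        exact_mod_cast hs.ne'
      linear_combination (-c) * mul_inv_cancel₀ this
    rw [h1, Complex.normSq_mul, Complex.normSq_mul, Complex.normSq_ofReal,
      Complex.normSq_ofReal]
    linear_combination (t * p * q * (q + p * t)⁻¹ * Complex.normSq c) * mul_inv_cancel₀ hs.ne'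

lemma tr_diag_mul {n : ℕ} (d : Fin n → ℂ) (M : Matrix (Fin n) (Fin n) ℂ) :
    trace (diagonal d * M) = ∑ k, d k * M k k := by
  simp [trace, diag, mul_apply, diagonal]

lemma conj_sandwich_trace {n : ℕ} (U V Y D : Matrix (Fin n) (Fin n) ℂ)
    (hU : U * Uᴴ = 1) (hV : V * Vᴴ = 1) :
    trace ((Vᴴ * D * V) * ((Uᴴ * Y * V)ᴴ * (Uᴴ * Y * V))) = trace (D * (Yᴴ * Y)) := by
  have hVl : ∀ X : Matrix (Fin n) (Fin n) ℂ, V * (Vᴴ * X) = X := fun X => by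
    rw [← Matrix.mul_assoc, hV, Matrix.one_mul]
  have hUl : ∀ X : Matrix (Fin n) (Fin n) ℂ, U * (Uᴴ * X) = X := fun X => by
    rw [← Matrix.mul_assoc, hU, Matrix.one_mul]
  simp only [conjTranspose_mul, conjTranspose_conjTranspose, Matrix.mul_assoc, hVl, hUl]
  rw [← Matrix.mul_assoc]
  rw [Matrix.trace_mul_comm, Matrix.trace_mul_comm D]
  simp only [Matrix.mul_assoc, hVl]

lemma conj_sandwich_trace' {n : ℕ} (U V M D : Matrix (Fin n) (Fin n) ℂ)
    (hU : U * Uᴴ = 1) (hV : V * Vᴴ = 1) :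
    trace ((Uᴴ * D * U) * ((Uᴴ * M * V) * (Uᴴ * M * V)ᴴ)) = trace (D * (M * Mᴴ)) := by
  have hVl : ∀ X : Matrix (Fin n) (Fin n) ℂ, V * (Vᴴ * X) = X := fun X => by
    rw [← Matrix.mul_assoc, hV, Matrix.one_mul]
  have hUl : ∀ X : Matrix (Fin n) (Fin n) ℂ, U * (Uᴴ * X) = X := fun X => by
    rw [← Matrix.mul_assoc, hU, Matrix.one_mul]
  simp only [conjTranspose_mul, conjTranspose_conjTranspose, Matrix.mul_assoc, hVl, hUl]
  rw [← Matrix.mul_assoc]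
  rw [Matrix.trace_mul_comm, Matrix.trace_mul_comm D]
  simp only [Matrix.mul_assoc, hUl]

/-- **Pusz–Woronowicz-type variational formula.** Let `ρ = Σ_k q_k |φ_k⟩⟨φ_k|` and
`σ = Σ_j p_j |ψ_j⟩⟨ψ_j|` be positive semi-definite operators on a finite-dimensional Hilbert
space (given via spectral decompositions with orthonormal eigenbases and nonnegative
eigenvalues).  For every `t ∈ (0,1]`,
`Σ_{j,k} (q_k p_j)/(q_k + p_j t) |⟨ψ_j|φ_k⟩|²
  = (1/t) · inf_Z ( Tr[ρ Z†Z] + t·Tr[σ (𝟙+Z)(𝟙+Z†)] )`,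
the infimum ranging over all linear operators `Z`.  (Terms with `q_k = 0` or `p_j = 0`
vanish, matching Lean's convention `x/0 = 0`.) -/
theorem stmt3 {n : ℕ} (q p : Fin n → ℝ) (hq : ∀ k, 0 ≤ q k) (hp : ∀ j, 0 ≤ p j)
    (φ ψ : Fin n → (Fin n → ℂ))
    (hφ : ∀ k l, star (φ k) ⬝ᵥ φ l = if k = l then 1 else 0)
    (hψ : ∀ k l, star (ψ k) ⬝ᵥ ψ l = if k = l then 1 else 0)
    (ρ σ : Matrix (Fin n) (Fin n) ℂ)
    (hρ : ρ = ∑ k, (q k : ℂ) • vecMulVec (φ k) (star (φ k)))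
    (hσ : σ = ∑ j, (p j : ℂ) • vecMulVec (ψ j) (star (ψ j)))
    (t : ℝ) (ht : t ∈ Set.Ioc (0 : ℝ) 1) :
    ∑ j, ∑ k, (q k * p j) / (q k + p j * t) * ‖star (ψ j) ⬝ᵥ φ k‖ ^ 2 =
      (1 / t) * ⨅ Z : Matrix (Fin n) (Fin n) ℂ,
        ((trace (ρ * (Zᴴ * Z))).re +
          t * (trace (σ * ((1 + Z) * (1 + Zᴴ)))).re) := by
  obtain ⟨ht0, _⟩ := ht
  set U : Matrix (Fin n) (Fin n) ℂ := Matrix.of fun j i => star (ψ j i) with hUdef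
  set V : Matrix (Fin n) (Fin n) ℂ := Matrix.of fun k i => star (φ k i) with hVdef
  have hUU : U * Uᴴ = 1 := by
    ext j l
    simpa [hUdef, mul_apply, dotProduct, one_apply] using hψ j l
  have hVV : V * Vᴴ = 1 := by
    ext j l
    simpa [hVdef, mul_apply, dotProduct, one_apply] using hφ j l
  have hUU' : Uᴴ * U = 1 := mul_eq_one_comm.mp hUU
  have hVV' : Vᴴ * V = 1 := mul_eq_one_comm.mp hVV
  set C : Matrix (Fin n) (Fin n) ℂ := U * Vᴴ with hCdef
  have hCval : ∀ j k, C j k = star (ψ j) ⬝ᵥ φ k := by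
    intro j k
    simp [hCdef, hUdef, hVdef, mul_apply, dotProduct]
  have hρ' : ρ = Vᴴ * diagonal (fun k => (q k : ℂ)) * V := by
    rw [hρ]; ext i i'
    simp [mul_apply, diagonal, vecMulVec_apply, Matrix.sum_apply, hVdef]
    apply Finset.sum_congr rfl
    intro k _
    ring
  have hσ' : σ = Uᴴ * diagonal (fun j => (p j : ℂ)) * U := by
    rw [hσ]; ext i i'
    simp [mul_apply, diagonal, vecMulVec_apply, Matrix.sum_apply, hUdef]
    apply Finset.sum_congr rfl
    intro k _
    ring
  -- the key identity
  have key : ∀ Z : Matrix (Fin n) (Fin n) ℂ,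
      (trace (ρ * (Zᴴ * Z))).re + t * (trace (σ * ((1 + Z) * (1 + Zᴴ)))).re
        = ∑ j, ∑ k, (q k * Complex.normSq ((U * Z * Vᴴ) j k)
            + t * p j * Complex.normSq (C j k + (U * Z * Vᴴ) j k)) := by
    intro Z
    set Y : Matrix (Fin n) (Fin n) ℂ := U * Z * Vᴴ with hYdef
    have hZ : Z = Uᴴ * Y * V := by
      rw [hYdef]
      symm
      calc Uᴴ * (U * Z * Vᴴ) * V = (Uᴴ * U) * Z * (Vᴴ * V) := by
            simp only [Matrix.mul_assoc]
        _ = Z := by rw [hUU', hVV', Matrix.one_mul, Matrix.mul_one]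
    have honeZ : 1 + Z = Uᴴ * (C + Y) * V := by
      rw [Matrix.mul_add, Matrix.add_mul, ← hZ, hCdef]
      congr 1
      symm
      calc Uᴴ * (U * Vᴴ) * V = (Uᴴ * U) * (Vᴴ * V) := by simp only [Matrix.mul_assoc]
        _ = 1 := by rw [hUU', hVV', Matrix.one_mul]
    have h1 : trace (ρ * (Zᴴ * Z))
        = ((∑ j, ∑ k, q k * Complex.normSq (Y j k) : ℝ) : ℂ) := by
      rw [hρ', hZ, conj_sandwich_trace U V Y _ hUU hVV, tr_diag_mul]
      simp only [mul_apply, conjTranspose_apply, Finset.mul_sum]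
      rw [Finset.sum_comm]
      push_cast
      apply Finset.sum_congr rfl; intro j _
      apply Finset.sum_congr rfl; intro k _
      rw [Complex.normSq_eq_conj_mul_self]
      rfl
    have h2 : trace (σ * ((1 + Z) * (1 + Zᴴ)))
        = ((∑ j, ∑ k, p j * Complex.normSq (C j k + Y j k) : ℝ) : ℂ) := by
      have : (1 : Matrix (Fin n) (Fin n) ℂ) + Zᴴ = (1 + Z)ᴴ := by
        rw [conjTranspose_add, conjTranspose_one]
      rw [this, hσ', honeZ, conj_sandwich_trace' U V (C + Y) _ hUU hVV, tr_diag_mul]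
      simp only [mul_apply, conjTranspose_apply, Finset.mul_sum]
      push_cast
      apply Finset.sum_congr rfl; intro j _
      apply Finset.sum_congr rfl; intro k _
      rw [mul_comm ((C + Y) j k), Complex.normSq_eq_conj_mul_self]
      simp [Matrix.add_apply]
    rw [h1, h2, Complex.ofReal_re, Complex.ofReal_re, Finset.mul_sum,
      ← Finset.sum_add_distrib]
    apply Finset.sum_congr rfl; intro j _
    rw [Finset.mul_sum, ← Finset.sum_add_distrib]
    apply Finset.sum_congr rfl; intro k _
    ring
  -- the sum on the LHS
  set S : ℝ := ∑ j, ∑ k, (q k * p j) / (q k + p j * t)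
      * ‖star (ψ j) ⬝ᵥ φ k‖ ^ 2 with hSdef
  have hS : S = ∑ j, ∑ k, (q k * p j) / (q k + p j * t) * Complex.normSq (C j k) := by
    apply Finset.sum_congr rfl; intro j _
    apply Finset.sum_congr rfl; intro k _
    rw [hCval, Complex.sq_norm]
  -- lower bound
  have hlb : ∀ Z : Matrix (Fin n) (Fin n) ℂ,
      t * S ≤ (trace (ρ * (Zᴴ * Z))).re + t * (trace (σ * ((1 + Z) * (1 + Zᴴ)))).re := by
    intro Z
    rw [key Z, hS, Finset.mul_sum]
    apply Finset.sum_le_sum; intro j _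
    rw [Finset.mul_sum]
    apply Finset.sum_le_sum; intro k _
    rw [← mul_assoc]
    exact pw_le (q k) (p j) t (hq k) (hp j) ht0 (C j k) ((U * Z * Vᴴ) j k)
  -- the minimizer
  set Y₀ : Matrix (Fin n) (Fin n) ℂ :=
    Matrix.of fun j k => ((-(t * p j) / (q k + p j * t) : ℝ) : ℂ) * C j k with hY₀def
  set Z₀ : Matrix (Fin n) (Fin n) ℂ := Uᴴ * Y₀ * V with hZ₀def
  have hYZ₀ : U * Z₀ * Vᴴ = Y₀ := by
    rw [hZ₀def]
    calc U * (Uᴴ * Y₀ * V) * Vᴴ = (U * Uᴴ) * Y₀ * (V * Vᴴ) := by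
          simp only [Matrix.mul_assoc]
      _ = Y₀ := by rw [hUU, hVV, Matrix.one_mul, Matrix.mul_one]
  have hmin : (trace (ρ * (Z₀ᴴ * Z₀))).re
      + t * (trace (σ * ((1 + Z₀) * (1 + Z₀ᴴ)))).re = t * S := by
    rw [key Z₀, hYZ₀, hS, Finset.mul_sum]
    apply Finset.sum_congr rfl; intro j _
    rw [Finset.mul_sum]
    apply Finset.sum_congr rfl; intro k _
    rw [← mul_assoc]
    exact pw_eq (q k) (p j) t (hq k) (hp j) ht0 (C j k)
  have hbdd : BddBelow (Set.range fun Z : Matrix (Fin n) (Fin n) ℂ =>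
      (trace (ρ * (Zᴴ * Z))).re + t * (trace (σ * ((1 + Z) * (1 + Zᴴ)))).re) := by
    refine ⟨t * S, ?_⟩
    rintro x ⟨Z, rfl⟩
    exact hlb Z
  have hinf : (⨅ Z : Matrix (Fin n) (Fin n) ℂ,
      ((trace (ρ * (Zᴴ * Z))).re + t * (trace (σ * ((1 + Z) * (1 + Zᴴ)))).re)) = t * S := by
    apply le_antisymm
    · exact le_of_le_of_eq (ciInf_le hbdd Z₀) hmin
    · exact le_ciInf hlb
  rw [hinf]
  rw [one_div, inv_mul_cancel_left₀ ht0.ne']
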